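/- Let G be a group and let d, m ∈ ℕ with d ≥ 1 and 2^m > d, and set n = (d+1)·m. Suppose G contains nontrivial subgroups D_0, …, D_{n−1}, each with trivial center, which pairwise commute elementwise. Then there exist elements h_0, …, h_d ∈ G such that for every i < d, the index [C_G(h_0, …, h_i) : C_G(h_0, …, h_{i+1})] is greater than d. In particular, G fails the M̃_c-condition with parameter d. -/

import Mathlib

section Aux

/-- If products of elements of pairwise-commuting centerless subgroups determine
their components, then distinct subsets give non-congruent products of the `B`'s
modulo the centralizer of the product of the `A`'s. -/
lemma block_core {G : Type*} [Group G] {m : ℕ} (E : Fin m → Subgroup G)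
    (hEcomm : Pairwise fun t s => ∀ x y : G, x ∈ E t → y ∈ E s → Commute x y)
    (hEcenter : ∀ t, Subgroup.center (E t) = ⊥)
    (A B : ∀ t, E t) (hAB : ∀ t, ¬ Commute ((A t : G)) ((B t : G)))
    (S S' : Finset (Fin m))
    (hc : Commute (Subgroup.noncommPiCoprod hEcomm A)
      ((Subgroup.noncommPiCoprod hEcomm (fun t => if t ∈ S then B t else 1))⁻¹ *
        Subgroup.noncommPiCoprod hEcomm (fun t => if t ∈ S' then B t else 1))) :
    S = S' := by
  have hind : iSupIndep E := by
    intro t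
    rw [Subgroup.disjoint_def]
    intro x hx hx'
    have hle : (⨆ (s) (_ : s ≠ t), E s) ≤ Subgroup.centralizer (E t) :=
      iSup_le fun s => iSup_le fun hst z hz => by
        rw [Subgroup.mem_centralizer_iff]
        intro g hg
        exact (hEcomm hst z g hz hg).symm.eq
    have hxz : ∀ g : E t, (g : G) * x = x * g := fun g =>
      Subgroup.mem_centralizer_iff.mp (hle hx') g g.2
    have : (⟨x, hx⟩ : E t) ∈ Subgroup.center (E t) := by
      rw [Subgroup.mem_center_iff]
      intro g
      exact Subtype.ext (hxz g)
    rw [hEcenter t, Subgroup.mem_bot] at this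
    exact congrArg Subtype.val this
  have hinj : Function.Injective (Subgroup.noncommPiCoprod hEcomm) :=
    Subgroup.injective_noncommPiCoprod_of_iSupIndep hind
  have heq : A * ((fun t => if t ∈ S then B t else 1)⁻¹ *
        (fun t => if t ∈ S' then B t else 1))
      = ((fun t => if t ∈ S then B t else 1)⁻¹ *
        (fun t => if t ∈ S' then B t else 1)) * A := by
    apply hinj
    rw [map_mul, map_mul, map_mul, map_mul, map_inv]
    exact hc.eq
  ext t
  have ht := congrFun heq t
  simp only [Pi.mul_apply, Pi.inv_apply] at ht
  constructor
  · intro htS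
    by_contra htS'
    rw [if_pos htS, if_neg htS', mul_one] at ht
    have hcoe : (A t : G) * (B t : G)⁻¹ = (B t : G)⁻¹ * (A t : G) := by
      exact_mod_cast congrArg Subtype.val ht
    have comm : Commute ((A t : G)) ((B t : G)⁻¹) := hcoe
    have comm2 := comm.inv_right
    rw [inv_inv] at comm2
    exact hAB t comm2
  · intro htS'
    by_contra htS
    rw [if_neg htS, if_pos htS', inv_one, one_mul] at ht
    have hcoe : (A t : G) * (B t : G) = (B t : G) * (A t : G) := by
      exact_mod_cast congrArg Subtype.val ht
    exact hAB t hcoe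

lemma relindex_zero_or_big {G : Type*} [Group G] (H K : Subgroup G) {m d : ℕ}
    (hm : d < 2 ^ m) (c : Finset (Fin m) → G) (hmem : ∀ S, c S ∈ K)
    (hsep : ∀ S S', (c S)⁻¹ * c S' ∈ H → S = S') :
    H.relIndex K = 0 ∨ d < H.relIndex K := by
  rcases eq_or_ne (H.relIndex K) 0 with h0 | h0
  · exact Or.inl h0
  right
  have hcard : H.relIndex K = Nat.card (K ⧸ H.subgroupOf K) := rfl
  have hfin : Finite (K ⧸ H.subgroupOf K) := by
    rw [hcard] at h0
    exact (Nat.card_ne_zero.mp h0).2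
  set F : Finset (Fin m) → K ⧸ H.subgroupOf K :=
    fun S => QuotientGroup.mk ⟨c S, hmem S⟩ with hF
  have hFinj : Function.Injective F := by
    intro S S' hss
    apply hsep
    have := QuotientGroup.eq.mp hss
    rw [Subgroup.mem_subgroupOf] at this
    exact_mod_cast this
  have h2 : 2 ^ m ≤ Nat.card (K ⧸ H.subgroupOf K) := by
    calc 2 ^ m = Nat.card (Finset (Fin m)) := by
          simp [Nat.card_eq_fintype_card]
      _ ≤ Nat.card (K ⧸ H.subgroupOf K) := Nat.card_le_card_of_injective F hFinj
  omega

end Aux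

/-- The simultaneous centralizer `C_G(h 0, …, h k) = ⋂_{j ≤ k} C_G(h j)` of the first
`k + 1` entries of a tuple `h : Fin n → G`. -/
def simCent {G : Type*} [Group G] {n : ℕ} (h : Fin n → G) (k : ℕ) : Subgroup G :=
  ⨅ j : Fin n, ⨅ _ : (j : ℕ) ≤ k, Subgroup.centralizer {h j}

/-- Let `G` be a group, `d ≥ 1`, `2 ^ m > d`, and `n = (d + 1) * m`.
If `G` contains nontrivial subgroups `D 0, …, D (n - 1)`, each with trivial center, which
pairwise commute elementwise, then there exist `h 0, …, h d ∈ G` such that for every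
`i < d` the index `[C_G(h 0, …, h i) : C_G(h 0, …, h (i+1))]` is greater than `d` (i.e.
infinite or `> d`).  In particular `G` fails the `M̃_c`-condition with parameter `d`. -/
theorem stmt6 {G : Type*} [Group G] (d m : ℕ) (hd : 1 ≤ d) (hm : d < 2 ^ m)
    (D : Fin ((d + 1) * m) → Subgroup G)
    (hnontriv : ∀ i, D i ≠ ⊥)
    (hcenter : ∀ i, Subgroup.center (D i) = ⊥)
    (hcomm : ∀ i j, i ≠ j → ∀ x ∈ D i, ∀ y ∈ D j, Commute x y) :
    (∃ h : Fin (d + 1) → G, ∀ i : Fin d,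
      (simCent h ((i : ℕ) + 1)).relIndex (simCent h (i : ℕ)) = 0 ∨
      d < (simCent h ((i : ℕ) + 1)).relIndex (simCent h (i : ℕ))) ∧
    ¬ (∀ g : Fin (d + 1) → G, ∃ i : Fin d,
      (simCent g ((i : ℕ) + 1)).relIndex (simCent g (i : ℕ)) ≠ 0 ∧
      (simCent g ((i : ℕ) + 1)).relIndex (simCent g (i : ℕ)) ≤ d) := by
  have main : ∃ h : Fin (d + 1) → G, ∀ i : Fin d,
      (simCent h ((i : ℕ) + 1)).relIndex (simCent h (i : ℕ)) = 0 ∨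
      d < (simCent h ((i : ℕ) + 1)).relIndex (simCent h (i : ℕ)) := by
    set e : Fin (d + 1) × Fin m → Fin ((d + 1) * m) := fun p => finProdFinEquiv p with he
    have heinj : Function.Injective e := finProdFinEquiv.injective
    have hpair : ∀ j, ∃ x y : G, x ∈ D j ∧ y ∈ D j ∧ ¬ Commute x y := by
      intro j
      obtain ⟨x, hx⟩ := Subgroup.ne_bot_iff_exists_ne_one.mp (hnontriv j)
      have hxc : (x : ↥(D j)) ∉ Subgroup.center (D j) := by
        rw [hcenter j]
        simpa using hx
      rw [Subgroup.mem_center_iff] at hxc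
      push_neg at hxc
      obtain ⟨g, hg⟩ := hxc
      refine ⟨(x : G), (g : G), x.2, g.2, fun hcom => hg ?_⟩
      exact Subtype.ext hcom.symm.eq
    choose a b ha hb hab using hpair
    set E : Fin (d + 1) → Fin m → Subgroup G := fun i t => D (e (i, t)) with hE
    have hEcomm : ∀ i, Pairwise fun t s => ∀ x y : G, x ∈ E i t → y ∈ E i s → Commute x y := by
      intro i t s hts x y hx hy
      exact hcomm (e (i, t)) (e (i, s)) (fun hh => hts (congrArg Prod.snd (heinj hh))) x hx y hy
    have hEcenter : ∀ i t, Subgroup.center (E i t) = ⊥ := fun i t => hcenter _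
    set ψ : ∀ i : Fin (d + 1), (∀ t, E i t) →* G :=
      fun i => Subgroup.noncommPiCoprod (hEcomm i) with hψ
    have hrange : ∀ i u, ψ i u ∈ ⨆ t, E i t := by
      intro i u
      rw [hψ]
      rw [← Subgroup.noncommPiCoprod_range (hcomm := hEcomm i)]
      exact ⟨u, rfl⟩
    have key : ∀ (J : Fin (d + 1)) (x : G), (∀ t, ∀ y ∈ E J t, Commute x y) →
        ∀ v, Commute x (ψ J v) := by
      intro J x hx v
      have hle : (⨆ t, E J t) ≤ Subgroup.centralizer {x} := by
        refine iSup_le fun t y hy => ?_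
        rw [Subgroup.mem_centralizer_singleton_iff]
        exact (hx t y hy).symm.eq
      have hmem := hle (hrange J v)
      rw [Subgroup.mem_centralizer_singleton_iff] at hmem
      exact hmem.symm
    have hcross : ∀ i j : Fin (d + 1), i ≠ j → ∀ u v, Commute (ψ i u) (ψ j v) := by
      intro i j hij u v
      refine key j (ψ i u) (fun t y hy => ?_) v
      refine (key i y (fun s w hw => ?_) u).symm
      refine hcomm (e (j, t)) (e (i, s)) (fun hh => hij ?_) y hy w hw
      exact (congrArg Prod.fst (heinj hh)).symm
    set A : ∀ (i : Fin (d + 1)) (t : Fin m), E i t := fun i t => ⟨a (e (i, t)), ha _⟩ with hA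
    set Bf : ∀ (i : Fin (d + 1)) (t : Fin m), E i t := fun i t => ⟨b (e (i, t)), hb _⟩ with hBf
    refine ⟨fun i => ψ i (A i), ?_⟩
    intro i
    set β : Fin (d + 1) := ⟨(i : ℕ) + 1, by omega⟩ with hβ
    set c : Finset (Fin m) → G :=
      fun S => ψ β (fun t => if t ∈ S then Bf β t else 1) with hc
    refine relindex_zero_or_big _ _ hm c ?_ ?_
    · intro S
      simp only [simCent, Subgroup.mem_iInf]
      intro j hj
      rw [Subgroup.mem_centralizer_singleton_iff]
      have hne : β ≠ j := by
        intro hji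
        rw [← hji] at hj
        simp only [hβ] at hj
        omega
      exact (hcross β j hne _ _).eq
    · intro S S' hss
      refine block_core (E β) (hEcomm β) (fun t => hEcenter β t) (A β) (Bf β)
        (fun t => hab _) S S' ?_
      have hle : simCent (fun i => ψ i (A i)) ((i : ℕ) + 1) ≤
          Subgroup.centralizer {ψ β (A β)} := by
        intro x hx
        simp only [simCent, Subgroup.mem_iInf] at hx
        exact hx β (by simp [hβ])
      have hmem2 := hle hss
      rw [Subgroup.mem_centralizer_singleton_iff] at hmem2
      exact hmem2.symm
  refine ⟨main, ?_⟩
  intro hall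
  obtain ⟨h, hh⟩ := main
  obtain ⟨i, h1, h2⟩ := hall h
  rcases hh i with h3 | h3
  · exact h1 h3
  · omega
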